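/- Let ρ, m, Cγ, w_S, l_S, w_T, l_T be real numbers with m ≥ 0, w_S ≠ ρ/2, and Sγ ≠ ρ/2, where Sγ = (m·w_S − l_S)/(m + 1) and S₁ = (w_S − l_S)/2. Suppose (w_T, l_T) satisfies both l_T = m·w_T − (1 + m)·Cγ and (l_T + ρ/2)·(w_S − ρ/2) = (l_S + ρ/2)·(w_T − ρ/2). Then (w_T − l_T) − (w_S − l_S) = 2·(ρ/2 − S₁)·(Cγ − Sγ)/(ρ/2 − Sγ). -/

import Mathlib

theorem stmt_9 (ρ m Cγ wS lS wT lT Sγ S₁ : ℝ) (hm : 0 ≤ m)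
    (hSγ : Sγ = (m * wS - lS) / (m + 1)) (hS₁ : S₁ = (wS - lS) / 2)
    (hwS : wS ≠ ρ / 2) (hSg : Sγ ≠ ρ / 2)
    (hT : lT = m * wT - (1 + m) * Cγ)
    (hST : (lT + ρ / 2) * (wS - ρ / 2) = (lS + ρ / 2) * (wT - ρ / 2)) :
    (wT - lT) - (wS - lS) = 2 * (ρ / 2 - S₁) * (Cγ - Sγ) / (ρ / 2 - Sγ) := by
  have hm1 : (m : ℝ) + 1 ≠ 0 := by positivity
  have hden : ρ / 2 - Sγ ≠ 0 := sub_ne_zero.mpr (Ne.symm hSg)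
  rw [eq_div_iff hden]
  subst hSγ hS₁ hT
  field_simp
  ring_nf
  ring_nf at hST
  linear_combination (2*(m-1)) * hST
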